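/- The generator best-response map T_φ, defined by T_φ(p_θ)(x̃|x,y) = p_ref(x̃|x,y) p_θ(y|x̃)^{-1/β} / Σ_{x̃'} p_ref(x̃'|x,y) p_θ(y|x̃')^{-1/β}, is Lipschitz in ℓ¹ norm: ‖T_φ(p_θ) - T_φ(p_{θ'})‖₁ ≤ 2 δ^{-1} β^{-1} γ^{-1-1/β} |X| · ‖p_θ - p_{θ'}‖₁. -/

import Mathlib

open Finset

lemma rpow_lip (β γ : ℝ) (hβ : 0 < β) (hγ : 0 < γ) {a b : ℝ}
    (ha : a ∈ Set.Icc γ 1) (hb : b ∈ Set.Icc γ 1) :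
    |a ^ (-(1 / β)) - b ^ (-(1 / β))| ≤ β⁻¹ * γ ^ (-1 - 1 / β) * |a - b| := by
  have hβ' : 0 < 1 / β := by positivity
  have key := Convex.norm_image_sub_le_of_norm_hasDerivWithin_le
    (f := fun t : ℝ => t ^ (-(1 / β)))
    (f' := fun t : ℝ => (-(1 / β)) * t ^ (-(1 / β) - 1))
    (s := Set.Icc γ 1) (C := β⁻¹ * γ ^ (-1 - 1 / β))
    (fun t ht => (Real.hasDerivAt_rpow_const
      (Or.inl (ne_of_gt (lt_of_lt_of_le hγ ht.1)))).hasDerivWithinAt)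
    ?_ (convex_Icc _ _) hb ha
  · simpa [Real.norm_eq_abs] using key
  · intro t ht
    have ht0 : 0 < t := lt_of_lt_of_le hγ ht.1
    have h1 : t ^ (-(1 / β) - 1) ≤ γ ^ (-(1 / β) - 1) :=
      Real.rpow_le_rpow_of_nonpos hγ ht.1 (by linarith)
    have h2 : |(-(1 / β)) * t ^ (-(1 / β) - 1)| = (1 / β) * t ^ (-(1 / β) - 1) := by
      rw [abs_mul, abs_of_nonneg (Real.rpow_nonneg ht0.le _), abs_neg,
        abs_of_nonneg hβ'.le]
    rw [Real.norm_eq_abs, h2]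
    have hexp : (-(1 / β) - 1 : ℝ) = -1 - 1 / β := by ring
    rw [hexp] at h1 ⊢
    calc 1 / β * t ^ (-1 - 1 / β : ℝ) ≤ 1 / β * γ ^ (-1 - 1 / β : ℝ) := by
          exact mul_le_mul_of_nonneg_left h1 (by positivity)
      _ = β⁻¹ * γ ^ (-1 - 1 / β : ℝ) := by rw [one_div]

/-- The generator best-response map
`T_φ(p_θ)(x̃|x,y) = p_ref(x̃|x,y) p_θ(y|x̃)^{-1/β} / Σ_{x̃'} p_ref(x̃'|x,y) p_θ(y|x̃')^{-1/β}`
is Lipschitz in ℓ¹ norm with constant `2 δ⁻¹ β⁻¹ γ^{-1-1/β} |X|`. -/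
theorem stmt_13 {X Xt : Type*} [Fintype X] [Fintype Xt]
    (β γ δ : ℝ) (hβ : 0 < β) (hγ : 0 < γ) (hδ : 0 < δ)
    (pref : X × Bool → Xt → ℝ) (hpref0 : ∀ c xt, 0 ≤ pref c xt)
    (hpref1 : ∀ c, ∑ xt : Xt, pref c xt = 1)
    (θ θ' : Xt → Bool → ℝ)
    (hθ : ∀ xt y, θ xt y ∈ Set.Icc γ 1) (hθ' : ∀ xt y, θ' xt y ∈ Set.Icc γ 1)
    (hZ : ∀ c : X × Bool, δ ≤ ∑ xt : Xt, pref c xt * θ xt c.2 ^ (-(1 / β)))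
    (hZ' : ∀ c : X × Bool, δ ≤ ∑ xt : Xt, pref c xt * θ' xt c.2 ^ (-(1 / β))) :
    ∑ c : X × Bool, ∑ xt : Xt,
        |pref c xt * θ xt c.2 ^ (-(1 / β))
            / (∑ xt' : Xt, pref c xt' * θ xt' c.2 ^ (-(1 / β)))
          - pref c xt * θ' xt c.2 ^ (-(1 / β))
            / (∑ xt' : Xt, pref c xt' * θ' xt' c.2 ^ (-(1 / β)))|
      ≤ 2 * δ⁻¹ * β⁻¹ * γ ^ (-1 - 1 / β) * (Fintype.card X : ℝ) *
          ∑ xt : Xt, ∑ y : Bool, |θ xt y - θ' xt y| := by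
  set L : ℝ := β⁻¹ * γ ^ (-1 - 1 / β) with hLdef
  have hL0 : 0 ≤ L := by positivity
  -- per-context bound
  have key : ∀ c : X × Bool,
      ∑ xt : Xt,
        |pref c xt * θ xt c.2 ^ (-(1 / β))
            / (∑ xt' : Xt, pref c xt' * θ xt' c.2 ^ (-(1 / β)))
          - pref c xt * θ' xt c.2 ^ (-(1 / β))
            / (∑ xt' : Xt, pref c xt' * θ' xt' c.2 ^ (-(1 / β)))|
      ≤ 2 * δ⁻¹ * L * ∑ xt : Xt, |θ xt c.2 - θ' xt c.2| := by
    intro c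
    set f : Xt → ℝ := fun xt => pref c xt * θ xt c.2 ^ (-(1 / β)) with hf
    set g : Xt → ℝ := fun xt => pref c xt * θ' xt c.2 ^ (-(1 / β)) with hg
    set Z : ℝ := ∑ xt' : Xt, f xt' with hZdef
    set Z' : ℝ := ∑ xt' : Xt, g xt' with hZ'def
    have hZpos : 0 < Z := lt_of_lt_of_le hδ (hZ c)
    have hZ'pos : 0 < Z' := lt_of_lt_of_le hδ (hZ' c)
    have hg0 : ∀ xt, 0 ≤ g xt := fun xt =>
      mul_nonneg (hpref0 c xt) (Real.rpow_nonneg (le_of_lt (lt_of_lt_of_le hγ (hθ' xt c.2).1)) _)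
    -- difference of sums bounded by sum of diffs
    have hsum : |Z - Z'| ≤ ∑ xt : Xt, |f xt - g xt| := by
      rw [hZdef, hZ'def, ← Finset.sum_sub_distrib]
      exact Finset.abs_sum_le_sum_abs _ _
    have hfg : ∀ xt : Xt, |f xt - g xt| ≤ L * |θ xt c.2 - θ' xt c.2| := by
      intro xt
      have : f xt - g xt = pref c xt * (θ xt c.2 ^ (-(1 / β)) - θ' xt c.2 ^ (-(1 / β))) := by
        rw [hf, hg]; ring
      rw [this, abs_mul, abs_of_nonneg (hpref0 c xt)]
      have hp1 : pref c xt ≤ 1 := by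
        rw [← hpref1 c]
        exact Finset.single_le_sum (fun i _ => hpref0 c i) (Finset.mem_univ xt)
      calc pref c xt * |θ xt c.2 ^ (-(1 / β)) - θ' xt c.2 ^ (-(1 / β))|
          ≤ 1 * (L * |θ xt c.2 - θ' xt c.2|) :=
            mul_le_mul hp1 (rpow_lip β γ hβ hγ (hθ xt c.2) (hθ' xt c.2)) (abs_nonneg _)
              zero_le_one
        _ = L * |θ xt c.2 - θ' xt c.2| := one_mul _
    have hstep : ∀ xt : Xt,
        |f xt / Z - g xt / Z'| ≤ |f xt - g xt| / Z + g xt * (|Z - Z'| / (Z * Z')) := by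
      intro xt
      have hsplit : f xt / Z - g xt / Z' = (f xt - g xt) / Z + g xt * ((Z' - Z) / (Z * Z')) := by
        field_simp
        ring
      rw [hsplit]
      calc |(f xt - g xt) / Z + g xt * ((Z' - Z) / (Z * Z'))|
          ≤ |(f xt - g xt) / Z| + |g xt * ((Z' - Z) / (Z * Z'))| := abs_add_le _ _
        _ = |f xt - g xt| / Z + g xt * (|Z - Z'| / (Z * Z')) := by
            rw [abs_div, abs_of_pos hZpos, abs_mul, abs_of_nonneg (hg0 xt), abs_div,
              abs_of_pos (mul_pos hZpos hZ'pos), abs_sub_comm Z' Z]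
    calc ∑ xt : Xt, |f xt / Z - g xt / Z'|
        ≤ ∑ xt : Xt, (|f xt - g xt| / Z + g xt * (|Z - Z'| / (Z * Z'))) :=
          Finset.sum_le_sum fun xt _ => hstep xt
      _ = (∑ xt : Xt, |f xt - g xt|) / Z + Z' * (|Z - Z'| / (Z * Z')) := by
          rw [Finset.sum_add_distrib, ← Finset.sum_div, ← Finset.sum_mul]
      _ = (∑ xt : Xt, |f xt - g xt|) / Z + |Z - Z'| / Z := by
          congr 1
          field_simp
      _ ≤ (∑ xt : Xt, |f xt - g xt|) / Z + (∑ xt : Xt, |f xt - g xt|) / Z := by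
          gcongr
      _ ≤ (∑ xt : Xt, |f xt - g xt|) * δ⁻¹ + (∑ xt : Xt, |f xt - g xt|) * δ⁻¹ := by
          have hs0 : 0 ≤ ∑ xt : Xt, |f xt - g xt| :=
            Finset.sum_nonneg fun xt _ => abs_nonneg _
          have h1 : (∑ xt : Xt, |f xt - g xt|) / Z ≤ (∑ xt : Xt, |f xt - g xt|) * δ⁻¹ := by
            rw [div_eq_mul_inv]
            exact mul_le_mul_of_nonneg_left (inv_anti₀ hδ (hZ c)) hs0 |>.trans_eq rfl
          exact add_le_add h1 h1
      _ ≤ (L * ∑ xt : Xt, |θ xt c.2 - θ' xt c.2|) * δ⁻¹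
          + (L * ∑ xt : Xt, |θ xt c.2 - θ' xt c.2|) * δ⁻¹ := by
          have : (∑ xt : Xt, |f xt - g xt|) ≤ L * ∑ xt : Xt, |θ xt c.2 - θ' xt c.2| := by
            rw [Finset.mul_sum]
            exact Finset.sum_le_sum fun xt _ => hfg xt
          gcongr
      _ = 2 * δ⁻¹ * L * ∑ xt : Xt, |θ xt c.2 - θ' xt c.2| := by ring
  calc ∑ c : X × Bool, ∑ xt : Xt,
        |pref c xt * θ xt c.2 ^ (-(1 / β))
            / (∑ xt' : Xt, pref c xt' * θ xt' c.2 ^ (-(1 / β)))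
          - pref c xt * θ' xt c.2 ^ (-(1 / β))
            / (∑ xt' : Xt, pref c xt' * θ' xt' c.2 ^ (-(1 / β)))|
      ≤ ∑ c : X × Bool, 2 * δ⁻¹ * L * ∑ xt : Xt, |θ xt c.2 - θ' xt c.2| :=
        Finset.sum_le_sum fun c _ => key c
    _ = 2 * δ⁻¹ * L * ∑ c : X × Bool, ∑ xt : Xt, |θ xt c.2 - θ' xt c.2| := by
        rw [← Finset.mul_sum]
    _ = 2 * δ⁻¹ * L * ((Fintype.card X : ℝ) * ∑ xt : Xt, ∑ y : Bool, |θ xt y - θ' xt y|) := by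
        congr 1
        rw [Fintype.sum_prod_type]
        have h1 : ∀ x : X, (∑ y : Bool, ∑ xt : Xt, |θ xt ((x, y) : X × Bool).2 - θ' xt ((x, y) : X × Bool).2|)
            = ∑ xt : Xt, ∑ y : Bool, |θ xt y - θ' xt y| := fun x => by exact Finset.sum_comm
        rw [Finset.sum_congr rfl fun x _ => h1 x, Finset.sum_const, nsmul_eq_mul,
          Finset.card_univ]
    _ = 2 * δ⁻¹ * β⁻¹ * γ ^ (-1 - 1 / β) * (Fintype.card X : ℝ) *
          ∑ xt : Xt, ∑ y : Bool, |θ xt y - θ' xt y| := by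
        rw [hLdef]; ring
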